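/- In the LRC storage model with parameters (k,g,r,l) satisfying the optimal-distance property, let τ ∈ [μ] be the index of an arbitrary local group, and let A ⊆ [g], B ⊆ [l]^τ, and D ⊆ [r]^τ be any subsets of indices of global parity nodes, local parity nodes of group τ, and information nodes of group τ, respectively, with |A| + |B| + |D| ≤ r. Then H(G_A, L_B, X_D | X_{[k]\[r]^τ}) = (|A| + |B| + |D|)·α; that is, G_A, L_B, X_D are conditionally independent given X_{[k]\[r]^τ} and each has full conditional entropy α. -/

import Mathlib

open Finset

open scoped Classical in
/-- Probability that the random variable `X` takes the value `s`, under the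
probability mass function `p` on the finite sample space `Ω`. -/
noncomputable def prEq {Ω : Type*} [Fintype Ω] {S : Type*} (p : Ω → ℝ) (X : Ω → S) (s : S) : ℝ :=
  ∑ ω, if X ω = s then p ω else 0

/-- Shannon entropy `H(X)` of the random variable `X` under the pmf `p`. -/
noncomputable def entropy {Ω : Type*} [Fintype Ω] {S : Type*} (p : Ω → ℝ) (X : Ω → S) : ℝ :=
  -∑ ω, p ω * Real.log (prEq p X (X ω))

/-- Conditional entropy `H(X | Y) = H(X, Y) - H(Y)`. -/
noncomputable def condEntropy {Ω : Type*} [Fintype Ω] {S T : Type*}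
    (p : Ω → ℝ) (X : Ω → S) (Y : Ω → T) : ℝ :=
  entropy p (fun ω => (X ω, Y ω)) - entropy p Y

/-- Conditional mutual information `I(X ; Y | Z) = H(X|Z) + H(Y|Z) - H(X,Y|Z)`. -/
noncomputable def condMI {Ω : Type*} [Fintype Ω] {S T U : Type*}
    (p : Ω → ℝ) (X : Ω → S) (Y : Ω → T) (Z : Ω → U) : ℝ :=
  condEntropy p X Z + condEntropy p Y Z - condEntropy p (fun ω => (X ω, Y ω)) Z

/-- The tuple of random variables `(Z i)_{i ∈ A}`, as a single random variable. -/
def tupleOn {Ω : Type*} {ι : Type*} {S : ι → Type*}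
    (Z : (i : ι) → Ω → S i) (A : Finset ι) (ω : Ω) :
    ∀ i : {x : ι // x ∈ A}, S i.1 := fun i => Z i.1 ω

open scoped Classical

section EntropyLemmas

variable {Ω : Type*} [Fintype Ω] {S T U V : Type*} {p : Ω → ℝ}

lemma prEq_nonneg (hp0 : ∀ ω, 0 ≤ p ω) (X : Ω → S) (s : S) : 0 ≤ prEq p X s := by
  unfold prEq
  refine Finset.sum_nonneg fun ω _ => ?_
  split_ifs
  exacts [hp0 ω, le_rfl]

lemma prEq_le (hp0 : ∀ ω, 0 ≤ p ω) {X : Ω → S} {Y : Ω → T} {s : S} {t : T}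
    (h : ∀ ω, X ω = s → Y ω = t) : prEq p X s ≤ prEq p Y t := by
  unfold prEq
  refine Finset.sum_le_sum fun ω _ => ?_
  split_ifs with h1 h2
  · exact le_rfl
  · exact absurd (h ω h1) h2
  · exact hp0 ω
  · exact le_rfl

lemma le_prEq (hp0 : ∀ ω, 0 ≤ p ω) (X : Ω → S) (ω : Ω) : p ω ≤ prEq p X (X ω) := by
  unfold prEq
  have := Finset.single_le_sum (f := fun ω' => if X ω' = X ω then p ω' else 0)
    (fun i _ => by split_ifs; exacts [hp0 i, le_rfl]) (Finset.mem_univ ω)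
  simpa using this

lemma prEq_pos (hp0 : ∀ ω, 0 ≤ p ω) (X : Ω → S) {ω : Ω} (h : 0 < p ω) :
    0 < prEq p X (X ω) := lt_of_lt_of_le h (le_prEq hp0 X ω)

lemma prEq_congr {X : Ω → S} {Y : Ω → T} {ω : Ω}
    (h : ∀ ω', X ω' = X ω ↔ Y ω' = Y ω) : prEq p X (X ω) = prEq p Y (Y ω) := by
  unfold prEq
  exact Finset.sum_congr rfl fun ω' _ => if_congr (h ω') rfl rfl

lemma entropy_congr {X : Ω → S} {Y : Ω → T}
    (h : ∀ ω ω', X ω = X ω' ↔ Y ω = Y ω') : entropy p X = entropy p Y := by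
  unfold entropy
  congr 1
  exact Finset.sum_congr rfl fun ω _ => by rw [prEq_congr (fun ω' => h ω' ω)]

lemma entropy_le_of_determines (hp0 : ∀ ω, 0 ≤ p ω) {X : Ω → S} {Y : Ω → T}
    (h : ∀ ω ω', X ω = X ω' → Y ω = Y ω') : entropy p Y ≤ entropy p X := by
  unfold entropy
  apply neg_le_neg
  refine Finset.sum_le_sum fun ω _ => ?_
  rcases (hp0 ω).eq_or_lt with h0 | h0
  · rw [← h0]; simp
  · exact mul_le_mul_of_nonneg_left
      (Real.log_le_log (prEq_pos hp0 X h0) (prEq_le hp0 fun ω' hx => h ω' ω hx)) (hp0 ω)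

lemma condEntropy_nonneg (hp0 : ∀ ω, 0 ≤ p ω) (X : Ω → S) (Y : Ω → T) :
    0 ≤ condEntropy p X Y :=
  sub_nonneg.mpr (entropy_le_of_determines hp0 fun _ _ h => congrArg Prod.snd h)

lemma condEntropy_zero {X : Ω → S} {Y : Ω → T}
    (h : ∀ ω ω', Y ω = Y ω' → X ω = X ω') : condEntropy p X Y = 0 :=
  sub_eq_zero.mpr (entropy_congr fun ω ω' =>
    ⟨fun hp => (Prod.ext_iff.1 hp).2, fun hy => Prod.ext_iff.2 ⟨h ω ω' hy, hy⟩⟩)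

lemma condEntropy_congr {X : Ω → S} {X' : Ω → U} {Y : Ω → T} {Y' : Ω → V}
    (hX : ∀ ω ω', X ω = X ω' ↔ X' ω = X' ω')
    (hY : ∀ ω ω', Y ω = Y ω' ↔ Y' ω = Y' ω') :
    condEntropy p X Y = condEntropy p X' Y' := by
  unfold condEntropy
  rw [entropy_congr hY, entropy_congr (X := fun ω => (X ω, Y ω))
    (Y := fun ω => (X' ω, Y' ω)) (fun ω ω' => by simp [Prod.ext_iff, hX ω ω', hY ω ω'])]

/-- helper: regroup a sum over `Ω` into a sum over attained values. -/
lemma sum_mul_fiber [DecidableEq V] (V' : Ω → V) (F : V → ℝ) :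
    ∑ ω, p ω * F (V' ω) = ∑ s ∈ Finset.univ.image V', prEq p V' s * F s := by
  unfold prEq
  simp_rw [Finset.sum_mul, ite_mul, zero_mul]
  rw [Finset.sum_comm]
  refine Finset.sum_congr rfl fun ω _ => ?_
  rw [Finset.sum_congr rfl (fun s _ => by rw [show (if V' ω = s then p ω * F s else 0)
      = (if s = V' ω then p ω * F s else 0) from by simp [eq_comm]]),
    Finset.sum_ite_eq' (Finset.univ.image V') (V' ω) (fun s => p ω * F s)]
  simp

lemma marginal_fst [DecidableEq S] (hp0 : ∀ ω, 0 ≤ p ω) (W : Ω → S) (Z : Ω → U) (z : U) :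
    ∑ x ∈ Finset.univ.image W, prEq p (fun ω => (W ω, Z ω)) (x, z) = prEq p Z z := by
  unfold prEq
  rw [Finset.sum_comm]
  refine Finset.sum_congr rfl fun ω _ => ?_
  simp only [Prod.mk.injEq]
  by_cases hz : Z ω = z
  · simp only [hz, and_true]
    rw [Finset.sum_ite_eq]
    simp [hz]
  · simp [hz]

lemma condMI_nonneg (hp0 : ∀ ω, 0 ≤ p ω) (hp1 : ∑ ω, p ω = 1)
    (X : Ω → S) (Y : Ω → T) (Z : Ω → U) : 0 ≤ condMI p X Y Z := by
  set a : Ω → ℝ := fun ω => prEq p (fun ω' => (X ω', Z ω')) (X ω, Z ω) with ha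
  set b : Ω → ℝ := fun ω => prEq p (fun ω' => (Y ω', Z ω')) (Y ω, Z ω) with hb
  set c : Ω → ℝ := fun ω => prEq p (fun ω' => ((X ω', Y ω'), Z ω')) ((X ω, Y ω), Z ω) with hc
  set d : Ω → ℝ := fun ω => prEq p Z (Z ω) with hd
  have h1 : condMI p X Y Z = ∑ ω, (p ω * Real.log (c ω) + p ω * Real.log (d ω)
      - p ω * Real.log (a ω) - p ω * Real.log (b ω)) := by
    simp only [condMI, condEntropy, entropy, ha, hb, hc, hd]
    rw [Finset.sum_sub_distrib, Finset.sum_sub_distrib, Finset.sum_add_distrib]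
    ring
  -- pointwise bound
  have h2 : ∀ ω, p ω - p ω * (a ω * b ω / (c ω * d ω)) ≤
      p ω * Real.log (c ω) + p ω * Real.log (d ω)
      - p ω * Real.log (a ω) - p ω * Real.log (b ω) := by
    intro ω
    rcases (hp0 ω).eq_or_lt with h0 | h0
    · rw [← h0]; simp
    · have hca : 0 < a ω := prEq_pos hp0 _ h0
      have hcb : 0 < b ω := prEq_pos hp0 _ h0
      have hcc : 0 < c ω := prEq_pos hp0 _ h0
      have hcd : 0 < d ω := prEq_pos hp0 _ h0
      have hx : Real.log (a ω * b ω / (c ω * d ω)) ≤ a ω * b ω / (c ω * d ω) - 1 :=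
        Real.log_le_sub_one_of_pos (by positivity)
      have hlog : Real.log (a ω * b ω / (c ω * d ω))
          = Real.log (a ω) + Real.log (b ω) - Real.log (c ω) - Real.log (d ω) := by
        rw [Real.log_div (by positivity) (by positivity), Real.log_mul hca.ne' hcb.ne',
          Real.log_mul hcc.ne' hcd.ne']
        ring
      rw [hlog] at hx
      have := mul_le_mul_of_nonneg_left hx (hp0 ω)
      nlinarith
  -- the sum of ratios is at most 1
  have h3 : ∑ ω, p ω * (a ω * b ω / (c ω * d ω)) ≤ 1 := by
    set Vf : Ω → (S × T) × U := fun ω => ((X ω, Y ω), Z ω) with hV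
    have hsum1 : ∑ z ∈ Finset.univ.image Z, prEq p Z z = 1 := by
      have := sum_mul_fiber (p := p) Z (fun _ => (1 : ℝ))
      simp only [mul_one] at this
      rw [← this, hp1]
    calc ∑ ω, p ω * (a ω * b ω / (c ω * d ω))
        = ∑ ω, p ω * ((fun s : (S × T) × U =>
            prEq p (fun ω' => (X ω', Z ω')) (s.1.1, s.2) *
            prEq p (fun ω' => (Y ω', Z ω')) (s.1.2, s.2) /
            (prEq p Vf s * prEq p Z s.2)) (Vf ω)) := Finset.sum_congr rfl fun ω _ => rfl
      _ = ∑ s ∈ Finset.univ.image Vf, prEq p Vf s *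
            (prEq p (fun ω' => (X ω', Z ω')) (s.1.1, s.2) *
            prEq p (fun ω' => (Y ω', Z ω')) (s.1.2, s.2) /
            (prEq p Vf s * prEq p Z s.2)) :=
          sum_mul_fiber (p := p) Vf (fun s =>
            prEq p (fun ω' => (X ω', Z ω')) (s.1.1, s.2) *
            prEq p (fun ω' => (Y ω', Z ω')) (s.1.2, s.2) /
            (prEq p Vf s * prEq p Z s.2))
      _ ≤ ∑ s ∈ Finset.univ.image Vf,
            prEq p (fun ω' => (X ω', Z ω')) (s.1.1, s.2) *
            prEq p (fun ω' => (Y ω', Z ω')) (s.1.2, s.2) / prEq p Z s.2 := by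
          refine Finset.sum_le_sum fun s _ => ?_
          rcases (prEq_nonneg hp0 Vf s).eq_or_lt with h0 | h0
          · rw [← h0, zero_mul]
            exact div_nonneg (mul_nonneg (prEq_nonneg hp0 _ _) (prEq_nonneg hp0 _ _))
              (prEq_nonneg hp0 _ _)
          · have hdpos : 0 < prEq p Z s.2 :=
              lt_of_lt_of_le h0 (prEq_le hp0 fun ω hω => by rw [← hω])
            refine le_of_eq ?_
            field_simp
      _ ≤ ∑ s ∈ ((Finset.univ.image X) ×ˢ (Finset.univ.image Y)) ×ˢ (Finset.univ.image Z),
            prEq p (fun ω' => (X ω', Z ω')) (s.1.1, s.2) *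
            prEq p (fun ω' => (Y ω', Z ω')) (s.1.2, s.2) / prEq p Z s.2 := by
          refine Finset.sum_le_sum_of_subset_of_nonneg ?_ fun s _ _ =>
            div_nonneg (mul_nonneg (prEq_nonneg hp0 _ _) (prEq_nonneg hp0 _ _))
              (prEq_nonneg hp0 _ _)
          intro s hs
          obtain ⟨ω, -, rfl⟩ := Finset.mem_image.1 hs
          simp [Finset.mem_product]
          exact ⟨⟨⟨ω, rfl⟩, ⟨ω, rfl⟩⟩, ⟨ω, rfl⟩⟩
      _ ≤ 1 := by
          rw [Finset.sum_product, Finset.sum_product]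
          rw [Finset.sum_congr rfl (fun x _ => Finset.sum_comm (s := Finset.univ.image Y)
            (t := Finset.univ.image Z)), Finset.sum_comm]
          have hinner : ∀ z ∈ Finset.univ.image Z,
              (∑ x ∈ Finset.univ.image X, ∑ y ∈ Finset.univ.image Y,
                prEq p (fun ω' => (X ω', Z ω')) (x, z) *
                prEq p (fun ω' => (Y ω', Z ω')) (y, z) / prEq p Z z) ≤ prEq p Z z := by
            intro z _
            have t1 : (∑ x ∈ Finset.univ.image X, ∑ y ∈ Finset.univ.image Y,
                prEq p (fun ω' => (X ω', Z ω')) (x, z) *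
                prEq p (fun ω' => (Y ω', Z ω')) (y, z) / prEq p Z z)
                = ∑ x ∈ Finset.univ.image X, ∑ y ∈ Finset.univ.image Y,
                prEq p (fun ω' => (X ω', Z ω')) (x, z) *
                (prEq p (fun ω' => (Y ω', Z ω')) (y, z) / prEq p Z z) :=
              Finset.sum_congr rfl fun x _ => Finset.sum_congr rfl fun y _ =>
                mul_div_assoc _ _ _
            have t2 : (∑ x ∈ Finset.univ.image X, prEq p (fun ω' => (X ω', Z ω')) (x, z)) *
                (∑ y ∈ Finset.univ.image Y,
                  prEq p (fun ω' => (Y ω', Z ω')) (y, z) / prEq p Z z)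
                = ∑ x ∈ Finset.univ.image X, ∑ y ∈ Finset.univ.image Y,
                prEq p (fun ω' => (X ω', Z ω')) (x, z) *
                (prEq p (fun ω' => (Y ω', Z ω')) (y, z) / prEq p Z z) :=
              Finset.sum_mul_sum _ _ _ _
            have t3 : (∑ y ∈ Finset.univ.image Y,
                  prEq p (fun ω' => (Y ω', Z ω')) (y, z) / prEq p Z z)
                = (∑ y ∈ Finset.univ.image Y,
                  prEq p (fun ω' => (Y ω', Z ω')) (y, z)) / prEq p Z z :=
              (Finset.sum_div _ _ _).symm
            rw [t1, ← t2, t3, marginal_fst hp0 X Z z, marginal_fst hp0 Y Z z]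
            rcases eq_or_ne (prEq p Z z) 0 with h0 | h0
            · rw [h0]; simp
            · rw [div_self h0, mul_one]
          refine le_trans (Finset.sum_le_sum fun z hz => ?_) (le_of_eq hsum1)
          simpa using hinner z hz
  rw [h1]
  have h4 : ∑ ω, (p ω - p ω * (a ω * b ω / (c ω * d ω))) ≤
      ∑ ω, (p ω * Real.log (c ω) + p ω * Real.log (d ω)
      - p ω * Real.log (a ω) - p ω * Real.log (b ω)) := Finset.sum_le_sum fun ω _ => h2 ω
  rw [Finset.sum_sub_distrib, hp1] at h4
  linarith

lemma condEntropy_pair_chain (X : Ω → S) (Y : Ω → T) (Z : Ω → U) :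
    condEntropy p (fun ω => (X ω, Y ω)) Z
      = condEntropy p Y Z + condEntropy p X (fun ω => (Y ω, Z ω)) := by
  unfold condEntropy
  rw [entropy_congr (X := fun ω => ((X ω, Y ω), Z ω)) (Y := fun ω => (X ω, (Y ω, Z ω)))
    (fun ω ω' => by simp [Prod.ext_iff]; tauto)]
  ring

lemma condEntropy_pair_le (hp0 : ∀ ω, 0 ≤ p ω) (hp1 : ∑ ω, p ω = 1)
    (X : Ω → S) (Y : Ω → T) (Z : Ω → U) :
    condEntropy p (fun ω => (X ω, Y ω)) Z ≤ condEntropy p X Z + condEntropy p Y Z := by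
  have := condMI_nonneg hp0 hp1 X Y Z
  unfold condMI at this
  linarith

lemma condEntropy_pairCond_le (hp0 : ∀ ω, 0 ≤ p ω) (hp1 : ∑ ω, p ω = 1)
    (X : Ω → S) (Y : Ω → T) (Z : Ω → U) :
    condEntropy p X (fun ω => (Y ω, Z ω)) ≤ condEntropy p X Z := by
  have h1 := condMI_nonneg hp0 hp1 X Y Z
  have h2 := condEntropy_pair_chain (p := p) X Y Z
  unfold condMI at h1
  linarith

lemma condEntropy_mono_cond (hp0 : ∀ ω, 0 ≤ p ω) (hp1 : ∑ ω, p ω = 1)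
    {X : Ω → S} {Z : Ω → U} {W : Ω → V}
    (h : ∀ ω ω', Z ω = Z ω' → W ω = W ω') :
    condEntropy p X Z ≤ condEntropy p X W := by
  have e1 : condEntropy p X Z = condEntropy p X (fun ω => (Z ω, W ω)) :=
    condEntropy_congr (fun _ _ => Iff.rfl) (fun ω ω' =>
      ⟨fun hz => Prod.ext_iff.2 ⟨hz, h _ _ hz⟩, fun hpair => (Prod.ext_iff.1 hpair).1⟩)
  rw [e1]
  exact condEntropy_pairCond_le hp0 hp1 X Z W

lemma condEntropy_mono_left (hp0 : ∀ ω, 0 ≤ p ω)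
    {X : Ω → S} {U' : Ω → U} {Z : Ω → V}
    (h : ∀ ω ω', X ω = X ω' → U' ω = U' ω') :
    condEntropy p U' Z ≤ condEntropy p X Z := by
  have e1 : condEntropy p X Z = condEntropy p (fun ω => (X ω, U' ω)) Z :=
    condEntropy_congr (fun ω ω' =>
      ⟨fun hx => Prod.ext_iff.2 ⟨hx, h _ _ hx⟩, fun hpair => (Prod.ext_iff.1 hpair).1⟩)
      (fun _ _ => Iff.rfl)
  have e2 := condEntropy_pair_chain (p := p) X U' Z
  have e3 := condEntropy_nonneg hp0 X (fun ω => (U' ω, Z ω))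
  linarith [e1, e2, e3]

lemma condEntropy_unit (hp1 : ∑ ω, p ω = 1) (X : Ω → S) :
    condEntropy p X (fun _ => ()) = entropy p X := by
  unfold condEntropy
  have h1 : entropy p (fun _ : Ω => ()) = 0 := by
    have hu : prEq p (fun _ : Ω => ()) () = 1 := by
      unfold prEq; simpa using hp1
    unfold entropy
    simp [hu]
  have h2 : entropy p (fun ω => (X ω, ())) = entropy p X :=
    entropy_congr (by simp [Prod.ext_iff])
  rw [h1, h2, sub_zero]

lemma condEntropy_le_entropy (hp0 : ∀ ω, 0 ≤ p ω) (hp1 : ∑ ω, p ω = 1)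
    (X : Ω → S) (Z : Ω → U) : condEntropy p X Z ≤ entropy p X := by
  rw [← condEntropy_unit hp1 X]
  exact condEntropy_mono_cond hp0 hp1 fun _ _ _ => rfl

lemma condEntropy_cond_ext (hp0 : ∀ ω, 0 ≤ p ω) (hp1 : ∑ ω, p ω = 1)
    {X : Ω → S} {V' : Ω → V} {C : Ω → U}
    (hV : condEntropy p V' C = 0) :
    condEntropy p X C = condEntropy p X (fun ω => (C ω, V' ω)) := by
  refine le_antisymm ?_ (condEntropy_mono_cond hp0 hp1
    (fun ω ω' hc => (Prod.ext_iff.1 hc).1))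
  have e2 := condEntropy_pair_chain (p := p) X V' C
  have e2' : condEntropy p X (fun ω => (V' ω, C ω))
      = condEntropy p X (fun ω => (C ω, V' ω)) :=
    condEntropy_congr (fun _ _ => Iff.rfl) (fun ω ω' => by simp [Prod.ext_iff]; tauto)
  have e3 : condEntropy p X C ≤ condEntropy p (fun ω => (X ω, V' ω)) C :=
    condEntropy_mono_left hp0 (fun ω ω' hh => (Prod.ext_iff.1 hh).1)
  linarith

lemma tupleOn_eq_iff {ι : Type*} {Sf : ι → Type*} (Z : ∀ i, Ω → Sf i) (A : Finset ι)
    (ω ω' : Ω) :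
    tupleOn Z A ω = tupleOn Z A ω' ↔ ∀ i ∈ A, Z i ω = Z i ω' := by
  constructor
  · intro h i hi; exact congrFun h ⟨i, hi⟩
  · intro h; funext i; exact h i.1 i.2

lemma condEntropy_tupleOn_le (hp0 : ∀ ω, 0 ≤ p ω) (hp1 : ∑ ω, p ω = 1)
    {ι : Type*} [DecidableEq ι] {Sf : ι → Type*} (Z : ∀ i, Ω → Sf i)
    {C' : Type*} (C : Ω → C') (A : Finset ι) :
    condEntropy p (tupleOn Z A) C ≤ ∑ i ∈ A, entropy p (Z i) := by
  induction A using Finset.induction_on with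
  | empty =>
    rw [condEntropy_zero (fun ω ω' _ => by
      funext i; exact absurd i.2 (Finset.notMem_empty i.1))]
    simp
  | @insert i s hi ih =>
    have e1 : condEntropy p (tupleOn Z (insert i s)) C
        = condEntropy p (fun ω => (Z i ω, tupleOn Z s ω)) C :=
      condEntropy_congr (fun ω ω' => by
        simp [tupleOn_eq_iff, Prod.ext_iff, Finset.forall_mem_insert])
        (fun _ _ => Iff.rfl)
    rw [e1, Finset.sum_insert hi]
    calc condEntropy p (fun ω => (Z i ω, tupleOn Z s ω)) C
        ≤ condEntropy p (Z i) C + condEntropy p (tupleOn Z s) C :=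
          condEntropy_pair_le hp0 hp1 _ _ _
      _ ≤ entropy p (Z i) + ∑ j ∈ s, entropy p (Z j) :=
          add_le_add (condEntropy_le_entropy hp0 hp1 _ _) ih

lemma entropy_tupleOn_le (hp0 : ∀ ω, 0 ≤ p ω) (hp1 : ∑ ω, p ω = 1)
    {ι : Type*} [DecidableEq ι] {Sf : ι → Type*} (Z : ∀ i, Ω → Sf i) (A : Finset ι) :
    entropy p (tupleOn Z A) ≤ ∑ i ∈ A, entropy p (Z i) := by
  rw [← condEntropy_unit hp1 (tupleOn Z A)]
  exact condEntropy_tupleOn_le hp0 hp1 Z _ A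

lemma condEntropy_tupleOn_indep (hp0 : ∀ ω, 0 ≤ p ω) (hp1 : ∑ ω, p ω = 1)
    {ι : Type*} [Fintype ι] [DecidableEq ι] {Sf : ι → Type*} (X : ∀ i, Ω → Sf i)
    {α : ℝ}
    (hind : entropy p (tupleOn X Finset.univ) = ∑ i, entropy p (X i))
    (hXα : ∀ i, entropy p (X i) = α) (A : Finset ι) :
    condEntropy p (tupleOn X A) (tupleOn X (Finset.univ \ A)) = (A.card : ℝ) * α := by
  have hsplit : entropy p (tupleOn X (Finset.univ : Finset ι))
      = entropy p (fun ω => (tupleOn X A ω, tupleOn X (Finset.univ \ A) ω)) := by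
    refine entropy_congr fun ω ω' => ?_
    simp only [tupleOn_eq_iff, Prod.ext_iff]
    constructor
    · intro h
      exact ⟨fun i _ => h i (Finset.mem_univ i), fun i _ => h i (Finset.mem_univ i)⟩
    · rintro ⟨h1, h2⟩ i _
      by_cases hiA : i ∈ A
      · exact h1 i hiA
      · exact h2 i (Finset.mem_sdiff.2 ⟨Finset.mem_univ i, hiA⟩)
  have hchain : entropy p (fun ω => (tupleOn X A ω, tupleOn X (Finset.univ \ A) ω))
      = entropy p (tupleOn X (Finset.univ \ A))
        + condEntropy p (tupleOn X A) (tupleOn X (Finset.univ \ A)) := by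
    unfold condEntropy; ring
  have h2 : entropy p (tupleOn X (Finset.univ \ A)) ≤ ((Finset.univ \ A).card : ℝ) * α := by
    refine le_trans (entropy_tupleOn_le hp0 hp1 X _) (le_of_eq ?_)
    rw [Finset.sum_congr rfl (fun i _ => hXα i), Finset.sum_const, nsmul_eq_mul]
  have h3 : condEntropy p (tupleOn X A) (tupleOn X (Finset.univ \ A)) ≤ (A.card : ℝ) * α := by
    refine le_trans (condEntropy_tupleOn_le hp0 hp1 X _ A) (le_of_eq ?_)
    rw [Finset.sum_congr rfl (fun i _ => hXα i), Finset.sum_const, nsmul_eq_mul]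
  have htot : entropy p (tupleOn X (Finset.univ : Finset ι)) = (Fintype.card ι : ℝ) * α := by
    rw [hind, Finset.sum_congr rfl (fun i _ => hXα i), Finset.sum_const, nsmul_eq_mul,
      Finset.card_univ]
  have hcard : A.card + (Finset.univ \ A).card = Fintype.card ι := by
    rw [Finset.card_sdiff_of_subset (Finset.subset_univ A)]
    have := Finset.card_le_univ A
    rw [← Finset.card_univ] at this ⊢
    omega
  have hcast : (A.card : ℝ) + ((Finset.univ \ A).card : ℝ) = (Fintype.card ι : ℝ) := by
    exact_mod_cast hcard
  have hcast' : (Fintype.card ι : ℝ) * α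
      = (A.card : ℝ) * α + ((Finset.univ \ A).card : ℝ) * α := by
    rw [← hcast]; ring
  linarith [hsplit, hchain, h2, h3, htot, hcast']

lemma cond_tuple_groups (hp0 : ∀ ω, 0 ≤ p ω) (hp1 : ∑ ω, p ω = 1)
    {I J K : Type*} [Fintype I] [Fintype J] [DecidableEq K]
    {SL : I → Type*} {SX : J → Type*}
    (L : ∀ i, Ω → SL i) (X : ∀ j, Ω → SX j) (gL : I → K) (gX : J → K)
    (hL : ∀ κ, condEntropy p (tupleOn L (Finset.univ.filter fun a => gL a = κ))
      (tupleOn X (Finset.univ.filter fun x => gX x = κ)) = 0)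
    (s : Finset K) :
    condEntropy p (tupleOn L (Finset.univ.filter fun a => gL a ∈ s))
      (tupleOn X (Finset.univ.filter fun x => gX x ∈ s)) = 0 := by
  induction s using Finset.induction_on with
  | empty =>
    exact condEntropy_zero (fun ω ω' _ => by
      funext i
      exact absurd (Finset.mem_filter.1 i.2).2 (Finset.notMem_empty _))
  | @insert κ s hκ ih =>
    refine le_antisymm ?_ (condEntropy_nonneg hp0 _ _)
    have e1 : condEntropy p (tupleOn L (Finset.univ.filter fun a => gL a ∈ insert κ s))
        (tupleOn X (Finset.univ.filter fun x => gX x ∈ insert κ s))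
        = condEntropy p (fun ω => (tupleOn L (Finset.univ.filter fun a => gL a = κ) ω,
            tupleOn L (Finset.univ.filter fun a => gL a ∈ s) ω))
          (tupleOn X (Finset.univ.filter fun x => gX x ∈ insert κ s)) := by
      refine condEntropy_congr (fun ω ω' => ?_) (fun _ _ => Iff.rfl)
      simp only [tupleOn_eq_iff, Prod.ext_iff, Finset.mem_filter, Finset.mem_univ,
        true_and, Finset.mem_insert]
      constructor
      · intro h
        exact ⟨fun i hi => h i (Or.inl hi), fun i hi => h i (Or.inr hi)⟩
      · rintro ⟨h1, h2⟩ i (hi | hi)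
        · exact h1 i hi
        · exact h2 i hi
    rw [e1]
    have e2 : condEntropy p (fun ω => (tupleOn L (Finset.univ.filter fun a => gL a = κ) ω,
          tupleOn L (Finset.univ.filter fun a => gL a ∈ s) ω))
          (tupleOn X (Finset.univ.filter fun x => gX x ∈ insert κ s))
        ≤ condEntropy p (tupleOn L (Finset.univ.filter fun a => gL a = κ))
            (tupleOn X (Finset.univ.filter fun x => gX x ∈ insert κ s))
          + condEntropy p (tupleOn L (Finset.univ.filter fun a => gL a ∈ s))
            (tupleOn X (Finset.univ.filter fun x => gX x ∈ insert κ s)) :=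
      condEntropy_pair_le hp0 hp1 _ _ _
    have e3 : condEntropy p (tupleOn L (Finset.univ.filter fun a => gL a = κ))
        (tupleOn X (Finset.univ.filter fun x => gX x ∈ insert κ s))
        ≤ condEntropy p (tupleOn L (Finset.univ.filter fun a => gL a = κ))
          (tupleOn X (Finset.univ.filter fun x => gX x = κ)) := by
      refine condEntropy_mono_cond hp0 hp1 fun ω ω' h => ?_
      rw [tupleOn_eq_iff] at h ⊢
      intro i hi
      refine h i ?_
      simp only [Finset.mem_filter, Finset.mem_univ, true_and, Finset.mem_insert] at hi ⊢
      exact Or.inl hi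
    have e4 : condEntropy p (tupleOn L (Finset.univ.filter fun a => gL a ∈ s))
        (tupleOn X (Finset.univ.filter fun x => gX x ∈ insert κ s))
        ≤ condEntropy p (tupleOn L (Finset.univ.filter fun a => gL a ∈ s))
          (tupleOn X (Finset.univ.filter fun x => gX x ∈ s)) := by
      refine condEntropy_mono_cond hp0 hp1 fun ω ω' h => ?_
      rw [tupleOn_eq_iff] at h ⊢
      intro i hi
      refine h i ?_
      simp only [Finset.mem_filter, Finset.mem_univ, true_and, Finset.mem_insert] at hi ⊢
      exact Or.inr hi
    have := hL κ
    linarith [e2, e3, e4, ih]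

lemma card_filter_fst_eq {m n : ℕ} (τ : Fin m) :
    (Finset.univ.filter fun x : Fin m × Fin n => x.1 = τ).card = n := by
  rw [show (Finset.univ.filter fun x : Fin m × Fin n => x.1 = τ)
      = {τ} ×ˢ Finset.univ from by
    ext x
    obtain ⟨x1, x2⟩ := x
    simp [Finset.mem_product, eq_comm]]
  simp

end EntropyLemmas

/-- In the LRC storage model with parameters `(k, g, r, l)` (with
`μ = k/r` local groups, per-node capacity `α > 0`) satisfying the optimal-distance
property (any `g + l` nodes are a function of the remaining nodes), let `τ` be the index
of an arbitrary local group, and let `A`, `B`, `D` be any subsets of indices of global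
parity nodes, local parity nodes of group `τ`, and information nodes of group `τ`,
respectively, with `|A| + |B| + |D| ≤ r`.  Then
`H(G_A, L_B, X_D | X_{[k]∖[r]^τ}) = (|A| + |B| + |D|)·α`; that is, `G_A, L_B, X_D` are
conditionally independent given the information nodes outside group `τ`, each with full
conditional entropy `α`. -/
theorem optimal_lrc_storage_conditional_uniformity
    {Ω : Type*} [Fintype Ω] {k g r l μ : ℕ}
    {SX : Fin μ × Fin r → Type*} {SL : Fin μ × Fin l → Type*} {SG : Fin g → Type*}
    (p : Ω → ℝ) (hp0 : ∀ ω, 0 ≤ p ω) (hp1 : ∑ ω, p ω = 1)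
    (α : ℝ) (hα : 0 < α)
    (hr : 1 ≤ r) (hl : 1 ≤ l) (hμ : 1 ≤ μ) (hk : k = μ * r)
    (X : (x : Fin μ × Fin r) → Ω → SX x)
    (L : (a : Fin μ × Fin l) → Ω → SL a)
    (G : (i : Fin g) → Ω → SG i)
    (hXindep : entropy p (tupleOn X Finset.univ) = ∑ x, entropy p (X x))
    (hXα : ∀ x, entropy p (X x) = α)
    (hL : ∀ τ : Fin μ,
        condEntropy p (tupleOn L (Finset.univ.filter fun a => a.1 = τ))
          (tupleOn X (Finset.univ.filter fun x => x.1 = τ)) = 0)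
    (hLcap : ∀ a, entropy p (L a) ≤ α)
    (hG : condEntropy p (tupleOn G Finset.univ) (tupleOn X Finset.univ) = 0)
    (hGcap : ∀ i, entropy p (G i) ≤ α)
    (hopt : ∀ (Q : Finset (Fin g)) (R : Finset (Fin μ × Fin l))
        (S : Finset (Fin μ × Fin r)),
        Q.card + R.card + S.card ≤ g + l →
        condEntropy p
          (fun ω => (tupleOn G Q ω, tupleOn L R ω, tupleOn X S ω))
          (fun ω => (tupleOn G (Finset.univ \ Q) ω, tupleOn L (Finset.univ \ R) ω,
            tupleOn X (Finset.univ \ S) ω)) = 0)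
    (τ : Fin μ)
    (A : Finset (Fin g)) (B : Finset (Fin μ × Fin l)) (D : Finset (Fin μ × Fin r))
    (hB : B ⊆ Finset.univ.filter fun a => a.1 = τ)
    (hD : D ⊆ Finset.univ.filter fun x => x.1 = τ)
    (hcard : A.card + B.card + D.card ≤ r) :
    condEntropy p (fun ω => (tupleOn G A ω, tupleOn L B ω, tupleOn X D ω))
        (tupleOn X (Finset.univ.filter fun x => x.1 ≠ τ))
      = ((A.card + B.card + D.card : ℕ) : ℝ) * α := by
  classical
  -- notation
  set Cτr : Finset (Fin μ × Fin r) := Finset.univ.filter fun x => x.1 = τ with hCτr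
  set Cτl : Finset (Fin μ × Fin l) := Finset.univ.filter fun a => a.1 = τ with hCτl
  have hCτrcard : Cτr.card = r := card_filter_fst_eq τ
  have hCτlcard : Cτl.card = l := card_filter_fst_eq τ
  have hABle : A.card + B.card ≤ (Cτr \ D).card := by
    rw [Finset.card_sdiff_of_subset hD]
    omega
  obtain ⟨F, hFsub, hFcard⟩ := Finset.exists_subset_card_eq hABle
  have hdisj : Disjoint D F :=
    (Finset.disjoint_of_subset_left hFsub Finset.sdiff_disjoint).symm
  set Tset : Finset (Fin μ × Fin r) := D ∪ F with hTset
  have hTsub : Tset ⊆ Cτr :=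
    Finset.union_subset hD (hFsub.trans (Finset.sdiff_subset))
  have hTτ : ∀ i ∈ Tset, i.1 = τ := fun i hi => (Finset.mem_filter.1 (hTsub hi)).2
  have hTcard : Tset.card = A.card + B.card + D.card := by
    rw [hTset, Finset.card_union_of_disjoint hdisj]
    omega
  set P : Ω → _ := fun ω => (tupleOn G A ω, tupleOn L B ω, tupleOn X D ω) with hP
  set XO := tupleOn X (Finset.univ.filter fun x : Fin μ × Fin r => x.1 ≠ τ) with hXO
  set W := tupleOn X (Finset.univ \ Tset) with hW
  -- upper bound
  have capG : condEntropy p (tupleOn G A) XO ≤ (A.card : ℝ) * α := by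
    refine le_trans (condEntropy_tupleOn_le hp0 hp1 G XO A) ?_
    refine le_trans (Finset.sum_le_sum fun i _ => hGcap i) (le_of_eq ?_)
    rw [Finset.sum_const, nsmul_eq_mul]
  have capL : condEntropy p (tupleOn L B) XO ≤ (B.card : ℝ) * α := by
    refine le_trans (condEntropy_tupleOn_le hp0 hp1 L XO B) ?_
    refine le_trans (Finset.sum_le_sum fun i _ => hLcap i) (le_of_eq ?_)
    rw [Finset.sum_const, nsmul_eq_mul]
  have capX : condEntropy p (tupleOn X D) XO ≤ (D.card : ℝ) * α := by
    refine le_trans (condEntropy_tupleOn_le hp0 hp1 X XO D) ?_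
    refine le_trans (Finset.sum_le_sum fun i _ => (hXα i).le) (le_of_eq ?_)
    rw [Finset.sum_const, nsmul_eq_mul]
  have hup : condEntropy p P XO ≤ ((A.card : ℝ) + B.card + D.card) * α := by
    have s1 : condEntropy p P XO ≤ condEntropy p (tupleOn G A) XO
        + condEntropy p (fun ω => (tupleOn L B ω, tupleOn X D ω)) XO :=
      condEntropy_pair_le hp0 hp1 _ _ _
    have s2 : condEntropy p (fun ω => (tupleOn L B ω, tupleOn X D ω)) XO
        ≤ condEntropy p (tupleOn L B) XO + condEntropy p (tupleOn X D) XO :=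
      condEntropy_pair_le hp0 hp1 _ _ _
    have : ((A.card : ℝ) + B.card + D.card) * α
        = (A.card : ℝ) * α + (B.card : ℝ) * α + (D.card : ℝ) * α := by ring
    linarith [capG, capL, capX]
  -- lower bound
  have hlow1 : condEntropy p (tupleOn X Tset) W = (Tset.card : ℝ) * α :=
    condEntropy_tupleOn_indep hp0 hp1 X hXindep hXα Tset
  set J : Ω → _ := fun ω => (tupleOn X F ω, P ω) with hJ
  have hJdet : condEntropy p (tupleOn X Tset) W ≤ condEntropy p J W := by
    refine condEntropy_mono_left hp0 fun ω ω' h => ?_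
    have hF' : tupleOn X F ω = tupleOn X F ω' := congrArg Prod.fst h
    have hD' : tupleOn X D ω = tupleOn X D ω' := congrArg (fun q => q.2.2.2) h
    rw [tupleOn_eq_iff] at hF' hD' ⊢
    intro i hi
    rcases Finset.mem_union.1 hi with hi | hi
    · exact hD' i hi
    · exact hF' i hi
  have hchainJ : condEntropy p J W = condEntropy p P W
      + condEntropy p (tupleOn X F) (fun ω => (P ω, W ω)) :=
    condEntropy_pair_chain (p := p) (tupleOn X F) P W
  -- the local parities of the other groups are determined by the conditioning
  set s0 : Finset (Fin μ) := Finset.univ.erase τ with hs0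
  set Lo := tupleOn L (Finset.univ.filter fun a : Fin μ × Fin l => a.1 ∈ s0) with hLo
  have hLother0 : condEntropy p Lo
      (tupleOn X (Finset.univ.filter fun x : Fin μ × Fin r => x.1 ∈ s0)) = 0 :=
    cond_tuple_groups hp0 hp1 L X Prod.fst Prod.fst hL s0
  have hLoPW : condEntropy p Lo (fun ω => (P ω, W ω)) = 0 := by
    refine le_antisymm ?_ (condEntropy_nonneg hp0 _ _)
    refine le_trans (condEntropy_mono_cond hp0 hp1 fun ω ω' h => ?_) (le_of_eq hLother0)
    have hW' : W ω = W ω' := congrArg Prod.snd h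
    rw [hW, tupleOn_eq_iff] at hW'
    rw [tupleOn_eq_iff]
    intro i hi
    refine hW' i ?_
    have hiτ : i.1 ≠ τ := by
      have := (Finset.mem_filter.1 hi).2
      rw [hs0] at this
      exact (Finset.mem_erase.1 this).1
    refine Finset.mem_sdiff.2 ⟨Finset.mem_univ i, fun hiT => hiτ (hTτ i hiT)⟩
  have hext : condEntropy p (tupleOn X F) (fun ω => (P ω, W ω))
      = condEntropy p (tupleOn X F) (fun ω => ((P ω, W ω), Lo ω)) :=
    condEntropy_cond_ext hp0 hp1 hLoPW
  -- apply the optimal-distance property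
  have hAg : A.card ≤ g := by
    have := Finset.card_le_univ A
    simpa using this
  have hBl : B.card ≤ l := le_trans (Finset.card_le_card hB) (le_of_eq hCτlcard)
  have hcards : (Finset.univ \ A).card + (Cτl \ B).card + F.card ≤ g + l := by
    rw [Finset.card_sdiff_of_subset (Finset.subset_univ A), Finset.card_sdiff_of_subset hB]
    have hgu : (Finset.univ : Finset (Fin g)).card = g := by simp
    rw [hgu, hCτlcard]
    omega
  have hopt0 := hopt (Finset.univ \ A) (Cτl \ B) F hcards
  have hXF_C0 : condEntropy p (tupleOn X F)
      (fun ω => (tupleOn G (Finset.univ \ (Finset.univ \ A)) ω,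
        tupleOn L (Finset.univ \ (Cτl \ B)) ω,
        tupleOn X (Finset.univ \ F) ω)) ≤ 0 := by
    refine le_trans (condEntropy_mono_left hp0 fun ω ω' h => ?_) (le_of_eq hopt0)
    have hF' : tupleOn X F ω = tupleOn X F ω' := congrArg (fun q => q.2.2) h
    exact hF'
  have hstep : condEntropy p (tupleOn X F) (fun ω => ((P ω, W ω), Lo ω))
      ≤ condEntropy p (tupleOn X F)
      (fun ω => (tupleOn G (Finset.univ \ (Finset.univ \ A)) ω,
        tupleOn L (Finset.univ \ (Cτl \ B)) ω,
        tupleOn X (Finset.univ \ F) ω)) := by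
    refine condEntropy_mono_cond hp0 hp1 fun ω ω' h => ?_
    have hP' : P ω = P ω' := congrArg (fun q => q.1.1) h
    have hW' : W ω = W ω' := congrArg (fun q => q.1.2) h
    have hLo' : Lo ω = Lo ω' := congrArg Prod.snd h
    have hGA : tupleOn G A ω = tupleOn G A ω' := congrArg (fun q => q.1) hP'
    have hLB : tupleOn L B ω = tupleOn L B ω' := congrArg (fun q => q.2.1) hP'
    have hXD : tupleOn X D ω = tupleOn X D ω' := congrArg (fun q => q.2.2) hP'
    rw [tupleOn_eq_iff] at hGA hLB hXD
    rw [hW, tupleOn_eq_iff] at hW'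
    rw [hLo, tupleOn_eq_iff] at hLo'
    refine Prod.ext_iff.2 ⟨?_, Prod.ext_iff.2 ⟨?_, ?_⟩⟩
    · rw [tupleOn_eq_iff]
      intro i hi
      refine hGA i ?_
      simpa using hi
    · rw [tupleOn_eq_iff]
      intro a ha
      rw [Finset.mem_sdiff, Finset.mem_sdiff] at ha
      by_cases haB : a ∈ B
      · exact hLB a haB
      · refine hLo' a ?_
        have haτ : a.1 ≠ τ := by
          intro haτ
          exact ha.2 ⟨Finset.mem_filter.2 ⟨Finset.mem_univ a, haτ⟩, haB⟩
        exact Finset.mem_filter.2 ⟨Finset.mem_univ a,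
          Finset.mem_erase.2 ⟨haτ, Finset.mem_univ _⟩⟩
    · rw [tupleOn_eq_iff]
      intro i hi
      rw [Finset.mem_sdiff] at hi
      by_cases hiD : i ∈ D
      · exact hXD i hiD
      · refine hW' i ?_
        refine Finset.mem_sdiff.2 ⟨Finset.mem_univ i, fun hiT => ?_⟩
        rcases Finset.mem_union.1 hiT with h' | h'
        · exact hiD h'
        · exact hi.2 h'
  have hXF_PW : condEntropy p (tupleOn X F) (fun ω => (P ω, W ω)) = 0 := by
    refine le_antisymm ?_ (condEntropy_nonneg hp0 _ _)
    rw [hext]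
    exact le_trans hstep hXF_C0
  have hPW_ge : (Tset.card : ℝ) * α ≤ condEntropy p P W := by
    rw [← hlow1]
    have := hJdet
    rw [hchainJ, hXF_PW] at this
    linarith
  have hfinal : condEntropy p P W ≤ condEntropy p P XO := by
    refine condEntropy_mono_cond hp0 hp1 fun ω ω' h => ?_
    rw [hW, tupleOn_eq_iff] at h
    rw [hXO, tupleOn_eq_iff]
    intro i hi
    have hiτ : i.1 ≠ τ := (Finset.mem_filter.1 hi).2
    exact h i (Finset.mem_sdiff.2 ⟨Finset.mem_univ i, fun hiT => hiτ (hTτ i hiT)⟩)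
  have hcast : ((A.card + B.card + D.card : ℕ) : ℝ) = (Tset.card : ℝ) := by
    exact_mod_cast hTcard.symm
  push_cast at hcast hup hPW_ge ⊢
  have hcast2 : ((A.card : ℝ) + B.card + D.card) * α = (Tset.card : ℝ) * α := by
    rw [hcast]
  linarith [hup, hPW_ge, hfinal, hcast2]
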